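/- There exist absolute constants c₀ ∈ (0, 3/4) and C > 0 such that the following holds. Let x ∈ (0,1], let r ∈ ℝ³ with |r| < 1 and set e := 1 − |r|², and assume 0 < e ≤ c₀ x². Let r' ∈ ℝ³ with |r'| < x and 1 − x + 2√e ≤ |r + r'| ≤ 1 + x − 2√e. Define the two shells A_r := {p ∈ ℝ³ : 1 < |r+p|² < 1 + e} and A_{r,r',x} := {p ∈ ℝ³ : x² < |r'−p|² < x² + e}. Then the Lebesgue measure of their intersection satisfies vol(A_r ∩ A_{r,r',x}) ≤ C x^{−1/2} e^{3/2}. -/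

import Mathlib

set_option maxHeartbeats 1000000


open MeasureTheory Real
open scoped ENNReal
open scoped RealInnerProductSpace

noncomputable abbrev E3 := EuclideanSpace ℝ (Fin 3)


lemma euclid_norm_sq_eq {ι : Type*} [Fintype ι] (y : EuclideanSpace ℝ ι) :
    ‖y‖^2 = ∑ i, (y i)^2 := by
  rw [EuclideanSpace.norm_eq, Real.sq_sqrt (by positivity)]
  simp [sq_abs]

lemma pi_succ_comp (y : E3) :
    (MeasurableEquiv.piFinSuccAbove (fun _ : Fin 3 => ℝ) 0)
      (((MeasurableEquiv.toLp 2 (Fin 3 → ℝ)).symm) y) = (y 0, fun j => y j.succ) := by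
  simp [MeasurableEquiv.piFinSuccAbove, Fin.insertNthEquiv, Fin.removeNth, Fin.tail,
    MeasurableEquiv.toLp]
  exact ⟨rfl, rfl⟩

lemma ball2_vol (c : EuclideanSpace ℝ (Fin 2)) (R : ℝ) (hR : 0 ≤ R) :
    volume (Metric.ball c (Real.sqrt R)) = ENNReal.ofReal (π * R) := by
  rw [EuclideanSpace.volume_ball]
  have : Real.Gamma ((Fintype.card (Fin 2) : ℝ) / 2 + 1) = 1 := by
    norm_num [Real.Gamma_two]
  rw [this]
  have h2 : Real.sqrt π ^ Fintype.card (Fin 2) = π := by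
    norm_num [Real.sq_sqrt Real.pi_nonneg]
  rw [h2]
  have : (ENNReal.ofReal (Real.sqrt R)) ^ Fintype.card (Fin 2) = ENNReal.ofReal R := by
    norm_num [← ENNReal.ofReal_pow (Real.sqrt_nonneg R), Real.sq_sqrt hR]
  rw [this, ← ENNReal.ofReal_mul hR, div_one, mul_comm]

lemma closedBall2_vol (c : EuclideanSpace ℝ (Fin 2)) (R : ℝ) (hR : 0 ≤ R) :
    volume (Metric.closedBall c (Real.sqrt R)) = ENNReal.ofReal (π * R) := by
  rw [Measure.addHaar_closedBall_eq_addHaar_ball, ball2_vol c R hR]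

lemma annulus_area_le (s t m : ℝ) (hm : 0 ≤ m) (h : t - s ≤ m) :
    volume {z : Fin 2 → ℝ | s < ∑ i, (z i)^2 ∧ ∑ i, (z i)^2 < t}
      ≤ ENNReal.ofReal (π * m) := by
  have hmeas : MeasurableSet {z : Fin 2 → ℝ | s < ∑ i, (z i)^2 ∧ ∑ i, (z i)^2 < t} := by
    have hc : Measurable fun z : Fin 2 → ℝ => ∑ i, (z i)^2 := by fun_prop
    exact (hc measurableSet_Ioi).inter (hc measurableSet_Iio)
  rw [← (EuclideanSpace.volume_preserving_symm_measurableEquiv_toLp (Fin 2)).measure_preimage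
    hmeas.nullMeasurableSet]
  have hpre : ((MeasurableEquiv.toLp 2 (Fin 2 → ℝ)).symm) ⁻¹'
      {z : Fin 2 → ℝ | s < ∑ i, (z i)^2 ∧ ∑ i, (z i)^2 < t}
      = {y : EuclideanSpace ℝ (Fin 2) | s < ‖y‖^2 ∧ ‖y‖^2 < t} := by
    ext y
    simp only [Set.mem_preimage, Set.mem_setOf_eq, euclid_norm_sq_eq]
    rfl
  rw [hpre]
  by_cases hs : 0 ≤ s
  · rcases le_or_gt t s with hts | hst
    · have : {y : EuclideanSpace ℝ (Fin 2) | s < ‖y‖^2 ∧ ‖y‖^2 < t} = ∅ := by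
        ext y; simp only [Set.mem_setOf_eq, Set.mem_empty_iff_false, iff_false, not_and, not_lt]
        intro h1; linarith
      simp [this]
    · have hsub : {y : EuclideanSpace ℝ (Fin 2) | s < ‖y‖^2 ∧ ‖y‖^2 < t} ⊆
          Metric.ball 0 (Real.sqrt t) \ Metric.closedBall 0 (Real.sqrt s) := by
        intro y hy
        obtain ⟨h1, h2⟩ := hy
        have hy2 : 0 < ‖y‖^2 := lt_of_le_of_lt hs h1
        have hy0 : 0 < ‖y‖ := by nlinarith [norm_nonneg y]
        constructor
        · simp only [Metric.mem_ball, dist_zero_right]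
          exact (Real.lt_sqrt (norm_nonneg y)).mpr h2
        · simp only [Metric.mem_closedBall, dist_zero_right, not_le]
          exact (Real.sqrt_lt' hy0).mpr h1
      calc volume {y : EuclideanSpace ℝ (Fin 2) | s < ‖y‖^2 ∧ ‖y‖^2 < t}
          ≤ volume (Metric.ball (0 : EuclideanSpace ℝ (Fin 2)) (Real.sqrt t) \ Metric.closedBall (0 : EuclideanSpace ℝ (Fin 2)) (Real.sqrt s)) :=
            measure_mono hsub
        _ = volume (Metric.ball (0 : EuclideanSpace ℝ (Fin 2)) (Real.sqrt t)) - volume (Metric.closedBall (0 : EuclideanSpace ℝ (Fin 2)) (Real.sqrt s)) := by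
            apply measure_diff (Metric.closedBall_subset_ball (Real.sqrt_lt_sqrt hs hst))
              measurableSet_closedBall.nullMeasurableSet (measure_closedBall_lt_top).ne
        _ = ENNReal.ofReal (π * t) - ENNReal.ofReal (π * s) := by
            rw [ball2_vol _ _ (by linarith), closedBall2_vol _ _ hs]
        _ = ENNReal.ofReal (π * t - π * s) := by
            rw [ENNReal.ofReal_sub _ (by positivity)]
        _ ≤ ENNReal.ofReal (π * m) := by
            apply ENNReal.ofReal_le_ofReal; nlinarith [Real.pi_pos]
  · push_neg at hs
    have hsub : {y : EuclideanSpace ℝ (Fin 2) | s < ‖y‖^2 ∧ ‖y‖^2 < t} ⊆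
        Metric.ball 0 (Real.sqrt (max t 0)) := by
      intro y hy
      simp only [Metric.mem_ball, dist_zero_right]
      exact (Real.lt_sqrt (norm_nonneg y)).mpr (lt_of_lt_of_le hy.2 (le_max_left t 0))
    calc volume {y : EuclideanSpace ℝ (Fin 2) | s < ‖y‖^2 ∧ ‖y‖^2 < t}
        ≤ volume (Metric.ball (0 : EuclideanSpace ℝ (Fin 2)) (Real.sqrt (max t 0))) := measure_mono hsub
      _ = ENNReal.ofReal (π * max t 0) := ball2_vol _ _ (le_max_right t 0)
      _ ≤ ENNReal.ofReal (π * m) := by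
          apply ENNReal.ofReal_le_ofReal
          have : max t 0 ≤ m := max_le (by linarith) hm
          nlinarith [Real.pi_pos]


/-- Estimate (eq. estimate area ar arprime nondangerous) of Lemma B.1: outside the dangerous
region, the intersection of the shells `A_r = {p : 1 < |r+p|² < 1+e}` and
`A_{r,r',x} = {p : x² < |r'-p|² < x²+e}` has volume at most `C x^{-1/2} e^{3/2}`. -/
theorem shell_shell_nondangerous_volume_bound :
    ∃ c₀ C : ℝ, 0 < c₀ ∧ c₀ < 3 / 4 ∧ 0 < C ∧
    ∀ (x : ℝ) (r r' : E3), 0 < x → x ≤ 1 → ‖r‖ < 1 →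
      0 < 1 - ‖r‖ ^ 2 → 1 - ‖r‖ ^ 2 ≤ c₀ * x ^ 2 →
      ‖r'‖ < x →
      1 - x + 2 * Real.sqrt (1 - ‖r‖ ^ 2) ≤ ‖r + r'‖ →
      ‖r + r'‖ ≤ 1 + x - 2 * Real.sqrt (1 - ‖r‖ ^ 2) →
      volume ({p : E3 | 1 < ‖r + p‖ ^ 2 ∧ ‖r + p‖ ^ 2 < 1 + (1 - ‖r‖ ^ 2)}
          ∩ {p : E3 | x ^ 2 < ‖r' - p‖ ^ 2 ∧ ‖r' - p‖ ^ 2 < x ^ 2 + (1 - ‖r‖ ^ 2)})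
        ≤ ENNReal.ofReal (C * x ^ (-(1 : ℝ) / 2) * (1 - ‖r‖ ^ 2) ^ ((3 : ℝ) / 2)) := by
  
  refine ⟨1/2, π, by norm_num, by norm_num, Real.pi_pos, ?_⟩
  intro x r r' hx hx1 hr he hec hr' hlow hupp
  set e := 1 - ‖r‖ ^ 2 with hedef
  have hsqe : 0 < Real.sqrt e := Real.sqrt_pos.mpr he
  set d := ‖r + r'‖ with hddef
  have hd2 : 2 * Real.sqrt e ≤ d := by linarith
  have hd0 : 0 < d := by linarith
  set n : E3 := d⁻¹ • (r + r') with hndef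
  have hvn : d • n = r + r' := by
    rw [hndef, smul_smul, mul_inv_cancel₀ hd0.ne', one_smul]
  have hn1 : ‖n‖ = 1 := by
    rw [hndef, norm_smul, norm_inv, Real.norm_eq_abs, abs_of_pos hd0, ← hddef,
      inv_mul_cancel₀ hd0.ne']
  set e₀ : E3 := EuclideanSpace.single (0 : Fin 3) (1:ℝ) with he₀def
  have he₀1 : ‖e₀‖ = 1 := by simp [he₀def, EuclideanSpace.norm_single]
  set f := Submodule.reflection (ℝ ∙ (n - e₀))ᗮ with hfdef
  have hfn : f n = e₀ := Submodule.reflection_sub (by rw [hn1, he₀1])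
  set a : ℝ := (1 - x^2 - e - ‖r‖^2 + ‖r'‖^2)/(2*d) - ⟪n, r'⟫ with hadef
  set U : Set (ℝ × (Fin 2 → ℝ)) := {wz | (a < wz.1 ∧ wz.1 < a + e/d) ∧
      (x^2 < wz.1^2 + ∑ i, (wz.2 i)^2 ∧ wz.1^2 + ∑ i, (wz.2 i)^2 < x^2 + e)} with hUdef
  have hcont : Measurable fun wz : ℝ × (Fin 2 → ℝ) => wz.1^2 + ∑ i, (wz.2 i)^2 := by fun_prop
  have hUmeas : MeasurableSet U := by
    have hrepr : U = (fun wz : ℝ × (Fin 2 → ℝ) => wz.1) ⁻¹' (Set.Ioo a (a+e/d)) ∩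
        (fun wz : ℝ × (Fin 2 → ℝ) => wz.1^2 + ∑ i, (wz.2 i)^2) ⁻¹' (Set.Ioo (x^2) (x^2+e)) := by
      ext wz; exact Iff.rfl
    rw [hrepr]
    exact (measurable_fst measurableSet_Ioo).inter (hcont measurableSet_Ioo)
  set Φ : E3 → ℝ × (Fin 2 → ℝ) := fun p =>
      (MeasurableEquiv.piFinSuccAbove (fun _ : Fin 3 => ℝ) 0)
        (((MeasurableEquiv.toLp 2 (Fin 3 → ℝ)).symm) (f (p - r'))) with hΦdef
  have hΦmp : MeasurePreserving Φ volume volume := by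
    have h1 := measurePreserving_sub_right (volume : Measure E3) r'
    have h2 := (f : E3 ≃ₗᵢ[ℝ] E3).measurePreserving
    have h3 := EuclideanSpace.volume_preserving_symm_measurableEquiv_toLp (Fin 3)
    have h4 := volume_preserving_piFinSuccAbove (fun _ : Fin 3 => ℝ) 0
    exact (h4.comp (h3.comp (h2.comp h1)))
  have hsub : ({p : E3 | 1 < ‖r + p‖ ^ 2 ∧ ‖r + p‖ ^ 2 < 1 + e}
      ∩ {p : E3 | x ^ 2 < ‖r' - p‖ ^ 2 ∧ ‖r' - p‖ ^ 2 < x ^ 2 + e}) ⊆ Φ ⁻¹' U := by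
    rintro p ⟨⟨h1, h2⟩, ⟨h3, h4⟩⟩
    set q : E3 := p - r' with hqdef
    have hkey : ⟪r, p⟫ + ⟪r', p⟫ = d * ⟪n, p⟫ := by
      rw [← inner_add_left, ← hvn, real_inner_smul_left]
    have hna : ‖r + p‖^2 = ‖r‖^2 + 2*⟪r,p⟫ + ‖p‖^2 := norm_add_sq_real r p
    have hnb : ‖r' - p‖^2 = ‖r'‖^2 - 2*⟪r',p⟫ + ‖p‖^2 := norm_sub_sq_real r' p
    have hL : 1 - x^2 - e - ‖r‖^2 + ‖r'‖^2 < 2*(d*⟪n,p⟫) := by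
      linarith [hkey, hna, hnb, h1, h4]
    have hUp : 2*(d*⟪n,p⟫) < 1 + e - x^2 - ‖r‖^2 + ‖r'‖^2 := by
      linarith [hkey, hna, hnb, h2, h3]
    have hnq : ⟪n, q⟫ = ⟪n, p⟫ - ⟪n, r'⟫ := by rw [hqdef, inner_sub_right]
    have hq1 : a < ⟪n, q⟫ := by
      have hdv : (1 - x^2 - e - ‖r‖^2 + ‖r'‖^2)/(2*d) < ⟪n,p⟫ :=
        (div_lt_iff₀ (by positivity)).mpr (by nlinarith)
      rw [hnq, hadef]; linarith
    have hq2 : ⟪n, q⟫ < a + e/d := by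
      have hdv : ⟪n,p⟫ < (1 - x^2 - e - ‖r‖^2 + ‖r'‖^2 + 2*e)/(2*d) :=
        (lt_div_iff₀ (by positivity)).mpr (by nlinarith)
      have hsplit : (1 - x^2 - e - ‖r‖^2 + ‖r'‖^2 + 2*e)/(2*d)
          = (1 - x^2 - e - ‖r‖^2 + ‖r'‖^2)/(2*d) + e/d := by
        field_simp
      rw [hnq, hadef]; rw [hsplit] at hdv; linarith
    have hqnorm : ‖q‖^2 = ‖r' - p‖^2 := by rw [hqdef, norm_sub_rev]
    show Φ p ∈ U
    have hΦp : Φ p = ((f q) 0, fun j => (f q) j.succ) := by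
      rw [hΦdef]; exact pi_succ_comp (f q)
    have hc1 : (f q) 0 = ⟪n, q⟫ := by
      calc (f q) 0 = ⟪e₀, f q⟫ := by
            rw [he₀def, EuclideanSpace.inner_single_left]; simp
        _ = ⟪f n, f q⟫ := by rw [hfn]
        _ = ⟪n, q⟫ := f.inner_map_map n q
    have hc2 : ((f q) 0)^2 + ∑ j : Fin 2, ((f q) j.succ)^2 = ‖q‖^2 := by
      rw [← Fin.sum_univ_succ (fun i => ((f q) i)^2), ← euclid_norm_sq_eq (f q), f.norm_map]
    rw [Set.mem_setOf_eq, hΦp]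
    refine ⟨⟨by simpa [hc1] using hq1, by simpa [hc1] using hq2⟩, ?_, ?_⟩
    · show x^2 < ((f q) 0)^2 + ∑ i : Fin 2, ((f q) i.succ)^2
      rw [hc2, hqnorm]; exact h3
    · show ((f q) 0)^2 + ∑ i : Fin 2, ((f q) i.succ)^2 < x^2 + e
      rw [hc2, hqnorm]; exact h4
  clear_value e d n e₀ f a U Φ
  have h32 : e ^ ((3:ℝ)/2) = e * Real.sqrt e := by
    rw [show ((3:ℝ)/2) = 1 + 1/2 by norm_num, Real.rpow_add he, Real.rpow_one,
      ← Real.sqrt_eq_rpow]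
  have hx12 : 1 ≤ x ^ (-(1:ℝ)/2) :=
    Real.one_le_rpow_of_pos_of_le_one_of_nonpos hx hx1 (by norm_num)
  have hed : e/d ≤ Real.sqrt e / 2 := by
    rw [div_le_div_iff₀ hd0 (by norm_num : (0:ℝ) < 2)]
    nlinarith [Real.mul_self_sqrt he.le, Real.sqrt_nonneg e]
  have hreal : π * e * (e/d) ≤ π * x ^ (-(1:ℝ)/2) * e ^ ((3:ℝ)/2) := by
    have hb : (0:ℝ) ≤ e * Real.sqrt e := by positivity
    have hpi : π ≤ π * x ^ (-(1:ℝ)/2) := by nlinarith [Real.pi_pos]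
    calc π * e * (e/d) ≤ π * e * (Real.sqrt e/2) := by
          apply mul_le_mul_of_nonneg_left hed (by positivity)
      _ ≤ π * x ^ (-(1:ℝ)/2) * (e * Real.sqrt e) := by
          have h1 : π * (e * Real.sqrt e) ≤ π * x ^ (-(1:ℝ)/2) * (e * Real.sqrt e) :=
            mul_le_mul_of_nonneg_right hpi hb
          have h0 : 0 ≤ π * (e * Real.sqrt e) := mul_nonneg Real.pi_nonneg hb
          calc π * e * (Real.sqrt e/2) = (π * (e * Real.sqrt e))/2 := by ring
            _ ≤ π * (e * Real.sqrt e) := by linarith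
            _ ≤ π * x ^ (-(1:ℝ)/2) * (e * Real.sqrt e) := h1
      _ = π * x ^ (-(1:ℝ)/2) * e ^ ((3:ℝ)/2) := by rw [h32]
  have hslice : ∀ w : ℝ, volume (Prod.mk w ⁻¹' U)
      ≤ (Set.Ioo a (a + e/d)).indicator (fun _ => ENNReal.ofReal (π * e)) w := by
    intro w
    by_cases hw : w ∈ Set.Ioo a (a + e/d)
    · rw [Set.indicator_of_mem hw]
      have hss : Prod.mk w ⁻¹' U ⊆
          {z : Fin 2 → ℝ | x^2 - w^2 < ∑ i, (z i)^2 ∧ ∑ i, (z i)^2 < x^2 + e - w^2} := by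
        intro z hz
        rw [hUdef] at hz
        obtain ⟨_, hz2⟩ := hz
        exact ⟨by linarith [hz2.1], by linarith [hz2.2]⟩
      refine le_trans (measure_mono hss) ?_
      exact annulus_area_le (x^2 - w^2) (x^2 + e - w^2) e he.le (by linarith)
    · rw [Set.indicator_of_notMem hw]
      have hss : Prod.mk w ⁻¹' U ⊆ (∅ : Set (Fin 2 → ℝ)) := by
        intro z hz
        rw [hUdef] at hz
        exact absurd (Set.mem_Ioo.mpr hz.1) hw
      exact le_of_eq (measure_mono_null hss measure_empty)
  calc volume ({p : E3 | 1 < ‖r + p‖ ^ 2 ∧ ‖r + p‖ ^ 2 < 1 + e}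
        ∩ {p : E3 | x ^ 2 < ‖r' - p‖ ^ 2 ∧ ‖r' - p‖ ^ 2 < x ^ 2 + e})
      ≤ volume (Φ ⁻¹' U) := measure_mono hsub
    _ = volume U := hΦmp.measure_preimage hUmeas.nullMeasurableSet
    _ = ∫⁻ w, volume (Prod.mk w ⁻¹' U) := by
        rw [Measure.volume_eq_prod, Measure.prod_apply hUmeas]
    _ ≤ ∫⁻ w, (Set.Ioo a (a + e/d)).indicator (fun _ => ENNReal.ofReal (π * e)) w :=
        lintegral_mono hslice
    _ = ENNReal.ofReal (π * e) * volume (Set.Ioo a (a + e/d)) :=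
        lintegral_indicator_const measurableSet_Ioo _
    _ = ENNReal.ofReal (π * e) * ENNReal.ofReal (e/d) := by
        rw [Real.volume_Ioo]; congr 1; ring
    _ = ENNReal.ofReal (π * e * (e/d)) := (ENNReal.ofReal_mul (by positivity)).symm
    _ ≤ ENNReal.ofReal (π * x ^ (-(1:ℝ)/2) * e ^ ((3:ℝ)/2)) := ENNReal.ofReal_le_ofReal hreal
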